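/- Let n ≥ 3 and let K_n be the complete graph on vertex set V with |V| = n, so that a rotation system for K_n assigns to each vertex v a cyclic permutation of the n−1 remaining vertices and Γ(K_n) = S_n. Then the number of orbits of the diagonal action of S_n on pairs (v, ρ), where v ∈ V and ρ is a rotation system of K_n (i.e., the number of ways to root the unlabeled imbeddings of K_n at a vertex), equals (1/(n−1)) · Σ_{d | n−1} φ(d) · ((n−2)!)^{(n−1)/d}. -/

import Mathlib

/-- A rotation system for a simple graph `G`. -/
def IsRotationSystem {V : Type*} (G : SimpleGraph V) (ρ : V → Equiv.Perm V) : Prop :=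
  ∀ v : V, (ρ v).IsCycleOn (G.neighborSet v) ∧ ∀ w : V, w ∉ G.neighborSet v → ρ v w = w

/-- The action of a permutation `γ` on rotation systems: `(γ·ρ)_{γ(v)} = γ ∘ ρ_v ∘ γ⁻¹`. -/
def rotAct {V : Type*} (γ : Equiv.Perm V) (ρ : V → Equiv.Perm V) : V → Equiv.Perm V :=
  fun w => γ * ρ (γ⁻¹ w) * γ⁻¹

set_option linter.unusedSectionVars false

open Equiv Equiv.Perm

namespace CVRIC

lemma perm_inv_apply_self {β : Type*} (e : Equiv.Perm β) (x : β) : e⁻¹ (e x) = x := by simp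

lemma perm_apply_inv_self {β : Type*} (e : Equiv.Perm β) (x : β) : e (e⁻¹ x) = x := by simp

variable (m : ℕ) [NeZero m]

abbrev V' := Option (ZMod m)

def τ (k : ZMod m) : Equiv.Perm (V' m) := Equiv.optionCongr (Equiv.addLeft k)

variable {m}

@[simp] lemma τ_none (k : ZMod m) : τ m k none = none := rfl
@[simp] lemma τ_some (k a : ZMod m) : τ m k (some a) = some (k + a) := rfl

lemma τ_add (a b : ZMod m) : τ m (a + b) = τ m a * τ m b := by
  ext x; cases x with
  | none => rfl
  | some y => simp [τ, add_assoc]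

@[simp] lemma τ_zero : τ m 0 = 1 := by
  ext x; cases x with
  | none => rfl
  | some y => simp [τ]

lemma τ_inv (a : ZMod m) : (τ m a)⁻¹ = τ m (-a) := by
  have : τ m a * τ m (-a) = 1 := by rw [← τ_add]; simp
  exact inv_eq_of_mul_eq_one_right this

lemma τ_comm (a b : ZMod m) : τ m a * τ m b = τ m b * τ m a := by
  rw [← τ_add, ← τ_add, add_comm]

lemma τ_one_pow (t : ℕ) : (τ m 1) ^ t = τ m (t : ZMod m) := by
  induction t with
  | zero => simp
  | succ t ih => rw [pow_succ, ih, ← τ_add]; push_cast; ring_nf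

lemma τ_injective : Function.Injective (τ (m := m)) := by
  intro a b h
  have := congrArg (fun σ : Equiv.Perm (V' m) => σ (some 0)) h
  simpa using this

variable (m)

abbrev T := {x : V' m // x ≠ some 0}

def t0 : T m := ⟨none, by simp⟩

abbrev A := {g : ZMod m ≃ T m // g 0 = t0 m}

variable {m}

/-- the permutation of the subtype induced by a code -/
def sp (g : A m) : Equiv.Perm (T m) := (g.1.symm.trans (Equiv.addRight (1 : ZMod m))).trans g.1

lemma sp_apply (g : A m) (x : T m) : sp g x = g.1 (g.1.symm x + 1) := rfl

def cyc (g : A m) : Equiv.Perm (V' m) := Equiv.Perm.ofSubtype (sp g)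

lemma cyc_fix (g : A m) : cyc g (some 0) = some 0 :=
  Equiv.Perm.ofSubtype_apply_of_not_mem _ (not_ne_iff.mpr rfl)

lemma cyc_apply_mem (g : A m) (x : V' m) (hx : x ≠ some 0) :
    cyc g x = (g.1 (g.1.symm ⟨x, hx⟩ + 1)).1 := by
  rw [cyc, Equiv.Perm.ofSubtype_apply_of_mem (sp g) hx]; rfl

lemma cyc_pow_apply (g : A m) (t : ℕ) (x : T m) :
    ((cyc g) ^ t) x.1 = (g.1 (g.1.symm x + (t : ZMod m))).1 := by
  induction t with
  | zero => simp
  | succ t ih =>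
      rw [pow_succ', Equiv.Perm.mul_apply, ih,
        cyc_apply_mem g _ (g.1 (g.1.symm x + (t : ZMod m))).2]
      push_cast
      simp [add_assoc]

lemma cyc_isCycleOn (g : A m) : (cyc g).IsCycleOn {x : V' m | x ≠ some 0} := by
  constructor
  · refine ⟨fun x hx => ?_, (cyc g).injective.injOn, fun x hx => ?_⟩
    · rw [cyc_apply_mem g x hx]; exact (g.1 _).2
    · refine ⟨(g.1 (g.1.symm ⟨x, hx⟩ - 1)).1, (g.1 _).2, ?_⟩
      rw [cyc_apply_mem g _ (g.1 _).2]
      simp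
  · intro x hx y hy
    refine ⟨((g.1.symm ⟨y, hy⟩ - g.1.symm ⟨x, hx⟩).val : ℤ), ?_⟩
    rw [zpow_natCast]
    have h := cyc_pow_apply g (g.1.symm ⟨y, hy⟩ - g.1.symm ⟨x, hx⟩).val ⟨x, hx⟩
    rw [ZMod.natCast_val, ZMod.cast_id] at h
    simp only [add_sub_cancel] at h
    rw [h, Equiv.apply_symm_apply]

lemma cyc_injective : Function.Injective (cyc (m := m)) := by
  intro g g' h
  have hsp : sp g = sp g' := by
    refine Equiv.ext fun x => ?_
    have := congrArg (fun σ : Equiv.Perm (V' m) => σ x.1) h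
    rw [cyc_apply_mem g x.1 x.2, cyc_apply_mem g' x.1 x.2] at this
    exact Subtype.ext (by simpa [sp_apply] using this)
  -- recover g from sp g
  ext1
  ext j
  have key : ∀ (g : A m) (j : ZMod m), g.1 j = ((cyc g) ^ j.val) (none : V' m) := by
    intro g j
    have := cyc_pow_apply g j.val (t0 m)
    rw [ZMod.natCast_val, ZMod.cast_id] at this
    rw [show ((t0 m) : T m).1 = (none : V' m) from rfl] at this
    have h0 : (g.1.symm (t0 m)) = 0 := (Equiv.symm_apply_eq _).mpr g.2.symm
    rw [this, h0, zero_add]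
  rw [key g j, key g' j, cyc, cyc, hsp]



lemma neighborSet_top' {α : Type*} (v : α) :
    (⊤ : SimpleGraph α).neighborSet v = {w | w ≠ v} := by
  ext w
  simp [SimpleGraph.mem_neighborSet, ne_comm]

lemma τ_image (i : ZMod m) : τ m i '' {x : V' m | x ≠ some 0} = {x : V' m | x ≠ some i} := by
  ext y
  constructor
  · rintro ⟨x, hx, rfl⟩
    intro hxy
    apply hx
    have : τ m i (some 0) = some i := by simp
    exact (τ m i).injective (hxy.trans this.symm)
  · intro hy
    refine ⟨(τ m i)⁻¹ y, ?_, by simp⟩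
    intro hc
    apply hy
    have := congrArg (τ m i) hc
    simpa using this

variable (m) in
def P (f : ZMod m → A m) : V' m → Equiv.Perm (V' m) := fun w =>
  Option.rec (τ m 1) (fun i => τ m i * cyc (f i) * (τ m i)⁻¹) w

@[simp] lemma P_none (f : ZMod m → A m) : P m f none = τ m 1 := rfl
@[simp] lemma P_some (f : ZMod m → A m) (i : ZMod m) :
    P m f (some i) = τ m i * cyc (f i) * (τ m i)⁻¹ := rfl

lemma isRotationSystem_P (f : ZMod m → A m) :
    IsRotationSystem (⊤ : SimpleGraph (V' m)) (P m f) := by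
  intro v
  rw [neighborSet_top']
  cases v with
  | none =>
      simp only [P_none]
      constructor
      · constructor
        · refine ⟨fun x hx => ?_, (τ m 1).injective.injOn, fun y hy => ?_⟩
          · cases x with
            | none => exact absurd rfl hx
            | some a => simp
          · cases y with
            | none => exact absurd rfl hy
            | some a =>
                exact ⟨some (a - 1), by simp, by simp⟩
        · intro x hx y hy
          cases x with
          | none => exact absurd rfl hx
          | some a =>
            cases y with
            | none => exact absurd rfl hy
            | some b =>
                refine ⟨((b - a).val : ℤ), ?_⟩
                rw [zpow_natCast, τ_one_pow, ZMod.natCast_val, ZMod.cast_id]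
                simp
      · intro w hw
        simp only [Set.mem_setOf_eq, not_not] at hw
        subst hw
        rfl
  | some i =>
      simp only [P_some]
      constructor
      · have h := (cyc_isCycleOn (f i)).conj (g := τ m i)
        rwa [τ_image] at h
      · intro w hw
        simp only [Set.mem_setOf_eq, not_not] at hw
        subst hw
        have h1 : (τ m i)⁻¹ (some i) = some 0 := by
          rw [τ_inv]; simp
        simp only [P_some, Equiv.Perm.mul_apply, h1, cyc_fix]
        simp

lemma P_equivariant (k : ZMod m) (f : ZMod m → A m) :
    rotAct (τ m k) (P m f) = P m (fun i => f (i - k)) := by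
  funext w
  cases w with
  | none =>
      have h : (τ m k)⁻¹ (none : V' m) = none := by rw [τ_inv]; rfl
      show τ m k * P m f ((τ m k)⁻¹ none) * (τ m k)⁻¹ = τ m 1
      rw [h, P_none, τ_inv, ← τ_add, ← τ_add]
      congr 1
      ring
  | some i =>
      have h : (τ m k)⁻¹ (some i) = some (i - k) := by rw [τ_inv]; simp [sub_eq_neg_add]
      show τ m k * P m f ((τ m k)⁻¹ (some i)) * (τ m k)⁻¹ = _
      rw [h, P_some, P_some]
      rw [τ_inv, τ_inv, τ_inv]
      calc τ m k * (τ m (i - k) * cyc (f (i - k)) * τ m (-(i - k))) * τ m (-k)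
          = (τ m k * τ m (i - k)) * cyc (f (i - k)) * (τ m (-(i - k)) * τ m (-k)) := by
            simp [mul_assoc]
        _ = τ m i * cyc (f (i - k)) * τ m (-i) := by
            rw [← τ_add, ← τ_add]
            congr 2 <;> ring

lemma recog (γ : Equiv.Perm (V' m)) (hγ : γ none = none) (f f' : ZMod m → A m)
    (h : rotAct γ (P m f) = P m f') :
    ∃ k : ZMod m, γ = τ m k ∧ ∀ i, f' i = f (i - k) := by
  have hγinv : γ⁻¹ (none : V' m) = none := by
    conv_lhs => rw [← hγ]
    rw [perm_inv_apply_self]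
  have h0 := congrFun h none
  rw [rotAct] at h0
  simp only [hγinv, P_none] at h0
  have hcomm : Commute γ (τ m 1) := by
    have := mul_inv_eq_iff_eq_mul.mp h0
    exact this
  obtain ⟨k, hk⟩ : ∃ k : ZMod m, γ (some 0) = some k := by
    cases hc : γ (some 0) with
    | none =>
        exact absurd (γ.injective (hc.trans hγ.symm)) (by simp)
    | some k => exact ⟨k, rfl⟩
  have hγτ : γ = τ m k := by
    refine Equiv.ext fun x => ?_
    cases x with
    | none => exact hγ
    | some a =>
        have hpow := hcomm.pow_right a.val
        have h1 : (τ m 1) ^ a.val = τ m a := by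
          rw [τ_one_pow, ZMod.natCast_val, ZMod.cast_id]
        rw [h1] at hpow
        have h2 : (some a : V' m) = τ m a (some 0) := by simp
        calc γ (some a) = (γ * τ m a) (some 0) := by rw [Equiv.Perm.mul_apply, ← h2]
          _ = (τ m a * γ) (some 0) := by rw [hpow]
          _ = τ m a (some k) := by rw [Equiv.Perm.mul_apply, hk]
          _ = τ m k (some a) := by simp [add_comm]
  refine ⟨k, hγτ, fun i => ?_⟩
  rw [hγτ, P_equivariant] at h
  have hi := congrFun h (some i)
  simp only [P_some] at hi
  have hc : cyc (f (i - k)) = cyc (f' i) := by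
    have h1 := mul_right_cancel hi
    exact mul_left_cancel h1
  exact (cyc_injective hc).symm

lemma perm_image_ne {β : Type*} (e : Equiv.Perm β) (a : β) :
    e '' {x | x ≠ a} = {x | x ≠ e a} := by
  ext y
  constructor
  · rintro ⟨x, hx, rfl⟩
    exact fun hc => hx (e.injective hc)
  · intro hy
    exact ⟨e⁻¹ y, fun hc => hy (by rw [← (perm_apply_inv_self e y), hc]),
      perm_apply_inv_self e y⟩

lemma pow_apply_mod {β : Type*} [Fintype β] [DecidableEq β] (δ : Equiv.Perm β) (s : Finset β)
    (hδ : δ.IsCycleOn ↑s) (hcard : s.card = m) (b : β) (hb : b ∈ s) (a t : ℕ)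
    (h : (a : ZMod m) = (t : ZMod m)) : (δ ^ a) b = (δ ^ t) b := by
  refine (hδ.pow_apply_eq_pow_apply hb).mpr ?_
  rw [hcard]
  exact (ZMod.natCast_eq_natCast_iff a t m).mp h

lemma exists_labeling {β : Type*} [Fintype β] [DecidableEq β] (δ : Equiv.Perm β) (s : Finset β)
    (hδ : δ.IsCycleOn ↑s) (hcard : s.card = m) (b : β) (hb : b ∈ s) :
    ∃ L : ZMod m → β, L 0 = b ∧ Function.Injective L ∧ (∀ j, L j ∈ s) ∧
      (∀ x ∈ s, ∃ j, L j = x) ∧ (∀ j, δ (L j) = L (j + 1)) := by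
  have hmem : ∀ t : ℕ, (δ ^ t) b ∈ s := by
    intro t
    induction t with
    | zero => simpa using hb
    | succ t ih =>
        rw [pow_succ', Equiv.Perm.mul_apply]
        exact hδ.1.mapsTo ih
  refine ⟨fun j => (δ ^ j.val) b, by simp, ?_, fun j => hmem j.val, ?_, ?_⟩
  · intro j j' hjj'
    have := (hδ.pow_apply_eq_pow_apply hb).mp hjj'
    rw [hcard] at this
    have h1 : j.val % m = j'.val % m := this
    rw [Nat.mod_eq_of_lt (ZMod.val_lt j), Nat.mod_eq_of_lt (ZMod.val_lt j')] at h1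
    exact ZMod.val_injective m h1
  · intro x hx
    obtain ⟨t, _, ht⟩ := hδ.exists_pow_eq hb hx
    refine ⟨(t : ZMod m), ?_⟩
    rw [← ht]
    refine pow_apply_mod δ s hδ hcard b hb _ _ ?_
    rw [ZMod.natCast_val, ZMod.cast_id]
  · intro j
    have h7 : δ ((δ ^ j.val) b) = (δ ^ (j.val + 1)) b := by
      rw [pow_succ', Equiv.Perm.mul_apply]
    rw [h7]
    refine pow_apply_mod δ s hδ hcard b hb _ _ ?_
    push_cast [ZMod.natCast_val, ZMod.cast_id]
    ring

lemma exists_code (δ : Equiv.Perm (V' m)) (hδ : δ.IsCycleOn {x : V' m | x ≠ some 0})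
    (hfix : δ (some 0) = some 0) : ∃ g : A m, cyc g = δ := by
  classical
  set s : Finset (V' m) := ({some 0}ᶜ : Finset (V' m)) with hs
  have hsmem : ∀ x : V' m, x ∈ s ↔ x ≠ some 0 := by
    intro x; simp [hs]
  have hscoe : (↑s : Set (V' m)) = {x : V' m | x ≠ some 0} := by
    ext x; simp [hsmem]
  have hcards : s.card = m := by
    rw [hs, Finset.card_compl, Finset.card_singleton, Fintype.card_option, ZMod.card]
    simp
  have hδ' : δ.IsCycleOn ↑s := by rwa [hscoe]
  have hbmem : (none : V' m) ∈ s := (hsmem none).mpr (by simp)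
  obtain ⟨L, hL0, hLinj, hLmem, hLsurj, hLsucc⟩ :=
    exists_labeling δ s hδ' hcards none hbmem
  have φbij : Function.Bijective (fun j : ZMod m => (⟨L j, (hsmem _).mp (hLmem j)⟩ : T m)) := by
    constructor
    · intro j j' hjj'
      exact hLinj (congrArg Subtype.val hjj')
    · rintro ⟨y, hy⟩
      obtain ⟨j, hj⟩ := hLsurj y ((hsmem y).mpr hy)
      exact ⟨j, Subtype.ext hj⟩
  set g0 : ZMod m ≃ T m := Equiv.ofBijective _ φbij with hg0
  have hg0apply : ∀ j, (g0 j : V' m) = L j := fun j => rfl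
  have hg00 : g0 0 = t0 m := Subtype.ext (by rw [hg0apply, hL0]; rfl)
  refine ⟨⟨g0, hg00⟩, ?_⟩
  refine Equiv.ext fun x => ?_
  by_cases hx : x = some 0
  · subst hx
    rw [cyc_fix, hfix]
  · obtain ⟨j, hj⟩ := hLsurj x ((hsmem x).mpr hx)
    rw [cyc_apply_mem _ x hx]
    have hxg : (⟨x, hx⟩ : T m) = g0 j := Subtype.ext (by rw [hg0apply, hj])
    show ((g0 (g0.symm ⟨x, hx⟩ + 1) : T m) : V' m) = δ x
    rw [hxg, Equiv.symm_apply_apply, hg0apply, ← hLsucc, hj]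

lemma decode (v : V' m) (ρ : V' m → Equiv.Perm (V' m))
    (hρ : IsRotationSystem (⊤ : SimpleGraph (V' m)) ρ) :
    ∃ (f : ZMod m → A m) (γ : Equiv.Perm (V' m)),
      γ none = v ∧ rotAct γ (P m f) = ρ := by
  classical
  have hfixall : ∀ w : V' m, ρ w w = w := by
    intro w
    refine (hρ w).2 w ?_
    rw [neighborSet_top']
    simp
  have hcyc : ∀ w : V' m, (ρ w).IsCycleOn {x : V' m | x ≠ w} := by
    intro w
    have := (hρ w).1
    rwa [neighborSet_top'] at this
  set s : Finset (V' m) := ({v}ᶜ : Finset (V' m)) with hs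
  have hsmem : ∀ x : V' m, x ∈ s ↔ x ≠ v := by intro x; simp [hs]
  have hscoe : (↑s : Set (V' m)) = {x : V' m | x ≠ v} := by ext x; simp [hsmem]
  have hcards : s.card = m := by
    rw [hs, Finset.card_compl, Finset.card_singleton, Fintype.card_option, ZMod.card]
    simp
  have hσ : (ρ v).IsCycleOn ↑s := by rw [hscoe]; exact hcyc v
  obtain ⟨u, hu⟩ := exists_ne v
  obtain ⟨L, hL0, hLinj, hLmem, hLsurj, hLsucc⟩ :=
    exists_labeling (ρ v) s hσ hcards u ((hsmem u).mpr hu)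
  -- build γ
  set Γ : V' m → V' m := fun x => Option.rec v (fun j => L j) x with hΓ
  have hΓinj : Function.Injective Γ := by
    intro x y hxy
    cases x with
    | none =>
        cases y with
        | none => rfl
        | some j => exact absurd hxy.symm ((hsmem _).mp (hLmem j))
    | some j =>
        cases y with
        | none => exact absurd hxy ((hsmem _).mp (hLmem j))
        | some j' => rw [hLinj hxy]
  set γ : Equiv.Perm (V' m) := Equiv.ofBijective Γ (Finite.injective_iff_bijective.mp hΓinj)
    with hγdef
  have hγn : γ none = v := rfl
  have hγs : ∀ j, γ (some j) = L j := fun j => rfl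
  -- the codes
  have hδprops : ∀ i : ZMod m,
      ((τ m i)⁻¹ * (γ⁻¹ * ρ (γ (some i)) * γ) * τ m i).IsCycleOn {x : V' m | x ≠ some 0} ∧
      ((τ m i)⁻¹ * (γ⁻¹ * ρ (γ (some i)) * γ) * τ m i) (some 0) = some 0 := by
    intro i
    constructor
    · have h1 : (γ⁻¹ * ρ (γ (some i)) * γ).IsCycleOn {x : V' m | x ≠ some i} := by
        have h2 := (hcyc (γ (some i))).conj (g := γ⁻¹)
        rw [inv_inv] at h2
        have h3 : ⇑(γ⁻¹) '' {x : V' m | x ≠ γ (some i)} = {x : V' m | x ≠ some i} := by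
          rw [perm_image_ne γ⁻¹]
          congr 1
          rw [perm_inv_apply_self]
        rwa [h3] at h2
      have h4 := h1.conj (g := (τ m i)⁻¹)
      rw [inv_inv] at h4
      have h5 : ⇑((τ m i)⁻¹) '' {x : V' m | x ≠ some i} = {x : V' m | x ≠ some 0} := by
        rw [perm_image_ne ((τ m i)⁻¹)]
        congr 1
        rw [τ_inv]
        simp
      rwa [h5] at h4
    · simp only [Equiv.Perm.mul_apply]
      rw [show τ m i (some 0) = some i by simp]
      rw [hfixall (γ (some i)), perm_inv_apply_self, τ_inv]
      simp
  choose f hf using fun i => exists_code _ (hδprops i).1 (hδprops i).2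
  refine ⟨f, γ, hγn, ?_⟩
  have key : ∀ x : V' m, γ * P m f x * γ⁻¹ = ρ (γ x) := by
    intro x
    cases x with
    | none =>
        have H : γ⁻¹ * ρ v * γ = τ m 1 := by
          refine Equiv.ext fun y => ?_
          cases y with
          | none =>
              simp only [Equiv.Perm.mul_apply]
              rw [hγn, hfixall v, ← hγn, perm_inv_apply_self]
              rfl
          | some j =>
              simp only [Equiv.Perm.mul_apply]
              rw [hγs j, hLsucc j, ← hγs (j + 1), perm_inv_apply_self]
              simp [add_comm]
        rw [P_none, ← H, hγn]
        group
    | some i =>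
        rw [P_some, hf i]
        group
  funext w
  have hk := key (γ⁻¹ w)
  rw [perm_apply_inv_self] at hk
  exact hk

lemma card_V' : Fintype.card (V' m) = m + 1 := by
  rw [Fintype.card_option, ZMod.card]

lemma card_ne {β : Type*} [Fintype β] [DecidableEq β] (b : β) :
    Fintype.card {y : β // y ≠ b} = Fintype.card β - 1 := by
  rw [← Fintype.card_subtype_eq b]
  have := Fintype.card_subtype_compl (fun y : β => y = b)
  simpa using this

lemma card_T : Fintype.card (T m) = m := by
  rw [card_ne, card_V', Nat.add_sub_cancel]

lemma card_A : Fintype.card (A m) = (m - 1).factorial := by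
  classical
  let γt := {y : ZMod m // y ≠ 0}
  obtain ⟨e₀, he₀⟩ : ∃ e₀ : Option γt ≃ ZMod m, e₀ none = 0 := by
    obtain ⟨e, he⟩ := ((Equiv.optionSubtype (0 : ZMod m)).symm (Equiv.refl γt) :
      { e : Option γt ≃ ZMod m // e none = 0 })
    exact ⟨e, he⟩
  have E2 : A m ≃ {h : Option γt ≃ T m // h none = t0 m} := by
    refine ⟨fun g => ⟨e₀.trans g.1, by rw [Equiv.trans_apply, he₀, g.2]⟩,
      fun h => ⟨e₀.symm.trans h.1, ?_⟩, fun g => ?_, fun h => ?_⟩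
    · rw [Equiv.trans_apply, show e₀.symm 0 = none from (Equiv.symm_apply_eq _).mpr he₀.symm, h.2]
    · ext j
      simp
    · ext j
      simp
  have E3 := Equiv.optionSubtype (t0 m) (α := γt)
  have hc1 : Fintype.card γt = m - 1 := by
    show Fintype.card {y : ZMod m // y ≠ 0} = m - 1
    rw [card_ne, ZMod.card]
  have hc2 : Fintype.card {y : T m // y ≠ t0 m} = m - 1 := by
    rw [card_ne, card_T]
  calc Fintype.card (A m) = Fintype.card (γt ≃ {y : T m // y ≠ t0 m}) :=
        Fintype.card_congr (E2.trans E3)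
    _ = (m - 1).factorial := by
        rw [Fintype.card_equiv (Fintype.equivOfCardEq (hc1.trans hc2.symm)), hc1]

variable (m) in
instance XAction : AddAction (ZMod m) (ZMod m → A m) where
  vadd k f := fun i => f (i - k)
  zero_vadd f := by funext i; show f (i - 0) = f i; rw [sub_zero]
  add_vadd a b f := by
    funext i
    show f (i - (a + b)) = f (i - a - b)
    ring_nf

lemma vadd_apply (k : ZMod m) (f : ZMod m → A m) (i : ZMod m) : (k +ᵥ f) i = f (i - k) := rfl

lemma card_fixedBy (k : ZMod m) :
    Nat.card (AddAction.fixedBy (ZMod m → A m) k) =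
      (Fintype.card (A m)) ^ (Nat.gcd m k.val) := by
  classical
  set H := AddSubgroup.zmultiples k with hH
  have E : (AddAction.fixedBy (ZMod m → A m) k) ≃ ((ZMod m ⧸ H) → A m) := by
    refine ⟨fun fh => Quotient.lift (fun i => fh.1 i) ?_, fun F =>
      ⟨fun i => F (QuotientAddGroup.mk i), ?_⟩, fun fh => ?_, fun F => ?_⟩
    · rintro i j hij
      have hmem : -i + j ∈ H := QuotientAddGroup.leftRel_apply.mp hij
      obtain ⟨f, hf⟩ := fh
      have hfs : k ∈ AddAction.stabilizer (ZMod m) f := hf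
      have hstab : (j - i) +ᵥ f = f := by
        have : j - i ∈ AddAction.stabilizer (ZMod m) f := by
          have h2 : j - i ∈ H := by rwa [sub_eq_neg_add]
          obtain ⟨c, hc⟩ := AddSubgroup.mem_zmultiples_iff.mp h2
          rw [← hc]
          exact AddSubgroup.zsmul_mem _ hfs c
        exact this
      show f i = f j
      calc f i = ((j - i) +ᵥ f) j := by rw [vadd_apply]; congr 1; ring
        _ = f j := by rw [hstab]
    · show k +ᵥ _ = _
      funext i
      rw [vadd_apply]
      congr 1
      rw [QuotientAddGroup.eq]
      refine AddSubgroup.mem_zmultiples_iff.mpr ⟨1, ?_⟩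
      simp
    · ext i
      rfl
    · funext q
      induction q using Quotient.inductionOn' with
      | h i => rfl
  rw [Nat.card_congr E, Nat.card_fun]
  have hm0 : m ≠ 0 := NeZero.ne m
  have hordk : addOrderOf k = m / Nat.gcd m k.val := by
    have h := ZMod.addOrderOf_coe k.val hm0
    rwa [ZMod.natCast_val, ZMod.cast_id] at h
  have hcardH : Nat.card H = m / Nat.gcd m k.val := by
    rw [hH, Nat.card_zmultiples, hordk]
  have htot : Nat.card (ZMod m ⧸ H) * (m / Nat.gcd m k.val) = m := by
    have := (AddSubgroup.card_eq_card_quotient_mul_card_addSubgroup H).symm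
    rw [hcardH] at this
    rw [this, Nat.card_eq_fintype_card, ZMod.card]
  have hgdvd : Nat.gcd m k.val ∣ m := Nat.gcd_dvd_left m k.val
  have hgpos : 0 < Nat.gcd m k.val := Nat.gcd_pos_of_pos_left _ (Nat.pos_of_ne_zero hm0)
  have hdivpos : 0 < m / Nat.gcd m k.val := Nat.div_pos (Nat.le_of_dvd (Nat.pos_of_ne_zero hm0) hgdvd) hgpos
  have hq : Nat.card (ZMod m ⧸ H) = Nat.gcd m k.val := by
    have h2 : Nat.gcd m k.val * (m / Nat.gcd m k.val) = m := Nat.mul_div_cancel' hgdvd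
    exact Nat.eq_of_mul_eq_mul_right hdivpos (htot.trans h2.symm)
  rw [hq, Nat.card_eq_fintype_card]

lemma card_orbits_mul_m :
    Nat.card (AddAction.orbitRel.Quotient (ZMod m) (ZMod m → A m)) * m =
      ∑ d ∈ m.divisors, Nat.totient (m / d) * (m - 1).factorial ^ d := by
  classical
  have hm0 : m ≠ 0 := NeZero.ne m
  letI : ∀ k : ZMod m, Fintype (AddAction.fixedBy (ZMod m → A m) k) :=
    fun k => Fintype.ofFinite _
  letI : Fintype (AddAction.orbitRel.Quotient (ZMod m) (ZMod m → A m)) := Fintype.ofFinite _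
  have burn := AddAction.sum_card_fixedBy_eq_card_orbits_mul_card_addGroup
    (ZMod m) (ZMod m → A m)
  rw [ZMod.card] at burn
  have step1 : ∀ k : ZMod m,
      Fintype.card (AddAction.fixedBy (ZMod m → A m) k) =
        (m - 1).factorial ^ Nat.gcd m k.val := by
    intro k
    rw [← Nat.card_eq_fintype_card, card_fixedBy, card_A]
  rw [Finset.sum_congr rfl (fun k _ => step1 k)] at burn
  have step2 : (∑ k : ZMod m, (m - 1).factorial ^ Nat.gcd m k.val) =
      ∑ j ∈ Finset.range m, (m - 1).factorial ^ Nat.gcd m j := by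
    refine Finset.sum_nbij' (fun k => k.val) (fun j => (j : ZMod m)) ?_ ?_ ?_ ?_ ?_
    · intro k _
      exact Finset.mem_range.mpr (ZMod.val_lt k)
    · intro j _
      exact Finset.mem_univ _
    · intro k _
      show ((k.val : ℕ) : ZMod m) = k
      rw [ZMod.natCast_val, ZMod.cast_id]
    · intro j hj
      exact ZMod.val_cast_of_lt (Finset.mem_range.mp hj)
    · intro k _
      rfl
  rw [step2] at burn
  have hmaps : ∀ j ∈ Finset.range m, Nat.gcd m j ∈ m.divisors :=
    fun j _ => Nat.mem_divisors.mpr ⟨Nat.gcd_dvd_left _ _, hm0⟩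
  rw [← Finset.sum_fiberwise_of_maps_to hmaps] at burn
  have step3 : ∀ d ∈ m.divisors,
      (∑ j ∈ (Finset.range m).filter (fun j => Nat.gcd m j = d),
        (m - 1).factorial ^ Nat.gcd m j) = Nat.totient (m / d) * (m - 1).factorial ^ d := by
    intro d hd
    have hdvd : d ∣ m := (Nat.mem_divisors.mp hd).1
    rw [Finset.sum_congr rfl (fun j hj => by rw [(Finset.mem_filter.mp hj).2]),
      Finset.sum_const, smul_eq_mul, ← Nat.totient_div_of_dvd hdvd]
  rw [Finset.sum_congr rfl step3] at burn
  rw [← Nat.card_eq_fintype_card] at burn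
  exact burn.symm

section Transport

variable {α β : Type*}

def orb (v : β) (ρ : β → Equiv.Perm β) : Set (β × (β → Equiv.Perm β)) :=
  {p | ∃ γ : Equiv.Perm β, (γ v, rotAct γ ρ) = p}

lemma rotAct_one (ρ : β → Equiv.Perm β) : rotAct (1 : Equiv.Perm β) ρ = ρ := by
  funext w
  simp [rotAct]

lemma rotAct_mul (γ γ' : Equiv.Perm β) (ρ : β → Equiv.Perm β) :
    rotAct γ (rotAct γ' ρ) = rotAct (γ * γ') ρ := by
  funext w
  simp [rotAct, mul_assoc, mul_inv_rev, Equiv.Perm.mul_apply]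

lemma orb_eq (v : β) (ρ : β → Equiv.Perm β) (γ₀ : Equiv.Perm β) :
    orb (γ₀ v) (rotAct γ₀ ρ) = orb v ρ := by
  ext p
  constructor
  · rintro ⟨γ, rfl⟩
    exact ⟨γ * γ₀, by rw [rotAct_mul]; rfl⟩
  · rintro ⟨γ, rfl⟩
    refine ⟨γ * γ₀⁻¹, ?_⟩
    rw [rotAct_mul, inv_mul_cancel_right]
    have : (γ * γ₀⁻¹) (γ₀ v) = γ v := by
      simp [Equiv.Perm.mul_apply]
    rw [this]

lemma permCongr_one (e : α ≃ β) : e.permCongr (1 : Equiv.Perm α) = 1 := by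
  ext x
  simp [Equiv.permCongr_apply]

lemma permCongr_mul (e : α ≃ β) (σ σ' : Equiv.Perm α) :
    e.permCongr (σ * σ') = e.permCongr σ * e.permCongr σ' := by
  ext x
  simp [Equiv.permCongr_apply, Equiv.Perm.mul_apply]

lemma permCongr_inv (e : α ≃ β) (σ : Equiv.Perm α) :
    e.permCongr σ⁻¹ = (e.permCongr σ)⁻¹ := by
  have h : e.permCongr σ * e.permCongr σ⁻¹ = 1 := by
    rw [← permCongr_mul]
    simp [permCongr_one]
  exact (inv_eq_of_mul_eq_one_right h).symm

lemma permCongr_pow (e : α ≃ β) (σ : Equiv.Perm α) (t : ℕ) :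
    e.permCongr (σ ^ t) = (e.permCongr σ) ^ t := by
  induction t with
  | zero => simpa using permCongr_one e
  | succ t ih => rw [pow_succ, pow_succ, permCongr_mul, ih]

lemma permCongr_zpow (e : α ≃ β) (σ : Equiv.Perm α) (i : ℤ) :
    e.permCongr (σ ^ i) = (e.permCongr σ) ^ i := by
  cases i with
  | ofNat t => rw [Int.ofNat_eq_coe, zpow_natCast, zpow_natCast, permCongr_pow]
  | negSucc t => rw [zpow_negSucc, zpow_negSucc, permCongr_inv, permCongr_pow]

lemma equiv_image_ne (e : α ≃ β) (a : α) : e '' {x | x ≠ a} = {y | y ≠ e a} := by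
  ext y
  constructor
  · rintro ⟨x, hx, rfl⟩
    exact fun hc => hx (e.injective hc)
  · intro hy
    exact ⟨e.symm y, fun hc => hy (by rw [← e.apply_symm_apply y, hc]), e.apply_symm_apply y⟩

lemma isCycleOn_permCongr (e : α ≃ β) (σ : Equiv.Perm α) (s : Set α)
    (h : σ.IsCycleOn s) : (e.permCongr σ).IsCycleOn (e '' s) := by
  constructor
  · refine ⟨?_, (e.permCongr σ).injective.injOn, ?_⟩
    · rintro y ⟨x, hx, rfl⟩
      exact ⟨σ x, h.1.mapsTo hx, by simp [Equiv.permCongr_apply]⟩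
    · rintro y ⟨x, hx, rfl⟩
      obtain ⟨x', hx', hxx'⟩ := h.1.surjOn hx
      exact ⟨e x', ⟨x', hx', rfl⟩, by simp [Equiv.permCongr_apply, hxx']⟩
  · rintro y ⟨a, ha, rfl⟩ z ⟨b, hb, rfl⟩
    obtain ⟨i, hi⟩ := h.2 ha hb
    exact ⟨i, by rw [← permCongr_zpow]; simp [Equiv.permCongr_apply, hi]⟩

lemma isRotationSystem_map (e : α ≃ β) (ρ : α → Equiv.Perm α)
    (h : IsRotationSystem (⊤ : SimpleGraph α) ρ) :
    IsRotationSystem (⊤ : SimpleGraph β) (fun w => e.permCongr (ρ (e.symm w))) := by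
  intro w
  constructor
  · rw [neighborSet_top']
    have h1 := (h (e.symm w)).1
    rw [neighborSet_top'] at h1
    have h2 := isCycleOn_permCongr e _ _ h1
    rwa [equiv_image_ne, e.apply_symm_apply] at h2
  · intro x hx
    rw [neighborSet_top'] at hx
    simp only [Set.mem_setOf_eq, not_not] at hx
    subst hx
    have h3 : ρ (e.symm x) (e.symm x) = e.symm x := by
      refine (h (e.symm x)).2 _ ?_
      rw [neighborSet_top']
      simp
    simp [Equiv.permCongr_apply, h3]

lemma rotAct_map (e : α ≃ β) (γ : Equiv.Perm α) (ρ : α → Equiv.Perm α) :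
    rotAct (e.permCongr γ) (fun w => e.permCongr (ρ (e.symm w))) =
      fun w => e.permCongr ((rotAct γ ρ) (e.symm w)) := by
  funext w
  show e.permCongr γ * e.permCongr (ρ (e.symm ((e.permCongr γ)⁻¹ w))) * (e.permCongr γ)⁻¹ = _
  rw [← permCongr_inv]
  have harg : e.symm ((e.permCongr γ⁻¹) w) = γ⁻¹ (e.symm w) := by
    simp [Equiv.permCongr_apply]
  rw [harg, ← permCongr_mul, ← permCongr_mul]
  rfl

end Transport

theorem main_count {W : Type*} [Fintype W] [DecidableEq W] (e : V' m ≃ W) :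
    ({O : Set (W × (W → Equiv.Perm W)) | ∃ (v : W) (ρ : W → Equiv.Perm W),
        IsRotationSystem (⊤ : SimpleGraph W) ρ ∧
        O = {p | ∃ γ : Equiv.Perm W, (γ v, rotAct γ ρ) = p}}).ncard
      = Nat.card (AddAction.orbitRel.Quotient (ZMod m) (ZMod m → A m)) := by
  classical
  set F : (ZMod m → A m) → Set (W × (W → Equiv.Perm W)) := fun f =>
    orb (e none) (fun w => e.permCongr (P m f (e.symm w))) with hF
  -- key: acting upstairs doesn't change the orbit set
  have keyA : ∀ (γ : Equiv.Perm (V' m)) (f : ZMod m → A m),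
      orb (e (γ none)) (fun w => e.permCongr ((rotAct γ (P m f)) (e.symm w))) = F f := by
    intro γ f
    have h1 : (fun w => e.permCongr ((rotAct γ (P m f)) (e.symm w))) =
        rotAct (e.permCongr γ) (fun w => e.permCongr ((P m f) (e.symm w))) :=
      (rotAct_map e γ _).symm
    have h2 : e (γ none) = (e.permCongr γ) (e none) := by simp [Equiv.permCongr_apply]
    rw [h1, h2, hF]
    exact orb_eq _ _ _
  -- soundness
  have hsound : ∀ (f : ZMod m → A m) (k : ZMod m), F (k +ᵥ f) = F f := by
    intro f k
    have h1 : P m (k +ᵥ f) = rotAct (τ m k) (P m f) := by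
      rw [P_equivariant]
      rfl
    have h2 := keyA (τ m k) f
    rw [τ_none] at h2
    rw [hF]
    simp only
    rw [h1]
    exact h2
  -- injectivity
  have hinj : ∀ f f' : ZMod m → A m, F f = F f' → ∃ k : ZMod m, k +ᵥ f = f' := by
    intro f f' hFF
    have hmem : (e none, fun w => e.permCongr (P m f' (e.symm w))) ∈ F f' := by
      refine ⟨1, ?_⟩
      rw [rotAct_one]
      simp
    rw [← hFF] at hmem
    obtain ⟨γW, hγW⟩ := hmem
    set γ : Equiv.Perm (V' m) := e.symm.permCongr γW with hγ
    have hΛ : e.permCongr γ = γW := by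
      ext x
      simp [hγ, Equiv.permCongr_apply]
    rw [← hΛ] at hγW
    have hfst : γ none = none := by
      have := congrArg Prod.fst hγW
      simp only at this
      have h4 : e (γ none) = e none := by
        rw [← this]
        simp [Equiv.permCongr_apply]
      exact e.injective h4
    have hsnd : rotAct γ (P m f) = P m f' := by
      have h5 := congrArg Prod.snd hγW
      simp only at h5
      rw [rotAct_map] at h5
      funext x
      have h6 := congrFun h5 (e x)
      simp only [Equiv.symm_apply_apply] at h6
      exact (Equiv.permCongr e).injective h6
    obtain ⟨k, hk, hfk⟩ := recog γ hfst f f' hsnd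
    exact ⟨k, funext fun i => (hfk i).symm⟩
  -- range
  have hrangesub : ∀ f : ZMod m → A m, F f ∈
      {O : Set (W × (W → Equiv.Perm W)) | ∃ (v : W) (ρ : W → Equiv.Perm W),
        IsRotationSystem (⊤ : SimpleGraph W) ρ ∧
        O = {p | ∃ γ : Equiv.Perm W, (γ v, rotAct γ ρ) = p}} := by
    intro f
    exact ⟨e none, fun w => e.permCongr (P m f (e.symm w)),
      isRotationSystem_map e _ (isRotationSystem_P f), rfl⟩
  have hrangesup : ∀ O ∈
      {O : Set (W × (W → Equiv.Perm W)) | ∃ (v : W) (ρ : W → Equiv.Perm W),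
        IsRotationSystem (⊤ : SimpleGraph W) ρ ∧
        O = {p | ∃ γ : Equiv.Perm W, (γ v, rotAct γ ρ) = p}},
      ∃ f : ZMod m → A m, F f = O := by
    rintro O ⟨v, ρ, hRS, rfl⟩
    have hRS0 : IsRotationSystem (⊤ : SimpleGraph (V' m))
        (fun x => e.symm.permCongr (ρ (e x))) := by
      have := isRotationSystem_map e.symm ρ hRS
      simpa using this
    obtain ⟨f, γ, hγn, hγρ⟩ := decode (e.symm v) (fun x => e.symm.permCongr (ρ (e x))) hRS0
    refine ⟨f, ?_⟩
    have h7 := keyA γ f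
    rw [hγρ, hγn] at h7
    have h8 : (fun w => e.permCongr ((fun x => e.symm.permCongr (ρ (e x))) (e.symm w))) = ρ := by
      funext w
      ext x
      simp [Equiv.permCongr_apply]
    rw [h8, e.apply_symm_apply] at h7
    exact h7.symm
  -- assemble
  set Φq : AddAction.orbitRel.Quotient (ZMod m) (ZMod m → A m) →
      Set (W × (W → Equiv.Perm W)) :=
    Quotient.lift F (by
      intro f f' hff'
      obtain ⟨k, hk⟩ := AddAction.orbitRel_apply.mp hff'
      rw [← hk]
      exact hsound f' k) with hΦq
  have hΦinj : Function.Injective Φq := by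
    intro q q'
    induction q using Quotient.inductionOn' with
    | h f =>
      induction q' using Quotient.inductionOn' with
      | h f' =>
        intro hq
        have hFF : F f = F f' := hq
        obtain ⟨k, hk⟩ := hinj f f' hFF
        apply Quotient.sound
        refine AddAction.orbitRel_apply.mpr ⟨-k, ?_⟩
        rw [← hk]
        show (-k) +ᵥ (k +ᵥ f) = f
        rw [vadd_vadd, neg_add_cancel, zero_vadd]
  have hrange : Set.range Φq =
      {O : Set (W × (W → Equiv.Perm W)) | ∃ (v : W) (ρ : W → Equiv.Perm W),
        IsRotationSystem (⊤ : SimpleGraph W) ρ ∧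
        O = {p | ∃ γ : Equiv.Perm W, (γ v, rotAct γ ρ) = p}} := by
    ext O
    constructor
    · rintro ⟨q, rfl⟩
      induction q using Quotient.inductionOn' with
      | h f => exact hrangesub f
    · intro hO
      obtain ⟨f, hf⟩ := hrangesup O hO
      exact ⟨Quotient.mk'' f, hf⟩
  rw [← hrange, ← Nat.card_coe_set_eq]
  exact (Nat.card_congr (Equiv.ofInjective Φq hΦinj)).symm

end CVRIC

/-- Theorem (vertex-rooted imbeddings of the complete graph): for `n ≥ 3`, the number of orbits
of the diagonal action of `S_n` on pairs `(v, ρ)`, where `v` is a vertex and `ρ` a rotation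
system of `K_n`, equals `(1/(n−1)) · Σ_{d ∣ n−1} φ(d) · ((n−2)!)^{(n−1)/d}`. -/
theorem card_vertex_rooted_imbeddings_complete {V : Type*} [Fintype V] [DecidableEq V]
    (n : ℕ) (hn : 3 ≤ n) (hcard : Fintype.card V = n) :
    (({O : Set (V × (V → Equiv.Perm V)) | ∃ (v : V) (ρ : V → Equiv.Perm V),
        IsRotationSystem (⊤ : SimpleGraph V) ρ ∧
        O = {p | ∃ γ : Equiv.Perm V, (γ v, rotAct γ ρ) = p}}).ncard : ℚ)
      = (1 / ((n : ℚ) - 1)) *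
          ∑ d ∈ (n - 1).divisors,
            (Nat.totient d : ℚ) * ((Nat.factorial (n - 2) : ℚ)) ^ ((n - 1) / d) := by
  classical
  set m : ℕ := n - 1 with hm
  letI : NeZero m := ⟨by omega⟩
  have hcards : Fintype.card (CVRIC.V' m) = Fintype.card V := by
    rw [CVRIC.card_V', hcard]
    omega
  set e : CVRIC.V' m ≃ V := Fintype.equivOfCardEq hcards with he
  have h1 := CVRIC.main_count (m := m) e
  rw [h1]
  have h2 := CVRIC.card_orbits_mul_m (m := m)
  have h3 : m - 1 = n - 2 := by omega
  rw [h3] at h2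
  have h4 : (∑ d ∈ m.divisors, Nat.totient (m / d) * (n - 2).factorial ^ d)
      = ∑ d ∈ m.divisors, Nat.totient d * (n - 2).factorial ^ (m / d) := by
    have h5 := Nat.sum_div_divisors m
      (fun d => Nat.totient d * (n - 2).factorial ^ (m / d))
    rw [← h5]
    refine Finset.sum_congr rfl ?_
    intro d hd
    have hdvd := (Nat.mem_divisors.mp hd).1
    have hm0 : m ≠ 0 := NeZero.ne m
    show Nat.totient (m/d) * (n-2).factorial ^ d = Nat.totient (m/d) * (n-2).factorial ^ (m/(m/d))
    rw [Nat.div_div_self hdvd hm0]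
  rw [h4] at h2
  have key : (Nat.card (AddAction.orbitRel.Quotient (ZMod m) (ZMod m → CVRIC.A m)) : ℚ) * (m : ℚ)
      = ∑ d ∈ m.divisors, (Nat.totient d : ℚ) * ((Nat.factorial (n - 2) : ℚ)) ^ (m / d) := by
    exact_mod_cast congrArg (Nat.cast : ℕ → ℚ) h2
  have hmQ : ((m : ℕ) : ℚ) ≠ 0 := by
    have : m ≠ 0 := NeZero.ne m
    exact_mod_cast this
  have hmcast : ((m : ℕ) : ℚ) = (n : ℚ) - 1 := by
    rw [hm, Nat.cast_sub (by omega : 1 ≤ n), Nat.cast_one]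
  rw [← hmcast, one_div, inv_mul_eq_div, eq_div_iff hmQ]
  exact key
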